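/- For every finite type σ over Ω and every countable ordinal α ≥ 1, the iteration functional Iter_α^σ is hereditarily positive. -/

import Mathlib

/-!  Framework: finite type structure over Ω = countable ordinals,
     limsup/liminf, transfinite iteration functionals, hereditarily
     positive and hereditarily monotone functionals. -/

noncomputable section
namespace IterOrd

open Ordinal

theorem omega1_pos : (0 : Ordinal) < ω₁ := Ordinal.omega0_pos.trans Ordinal.omega0_lt_omega_one

/-- `Om` is Ω, the set of countable ordinals (ordinals `< ω₁`). -/
abbrev Om : Type 1 := {o : Ordinal // o < ω₁}

/-- Infimum of a subset of Ω (the minimum for nonempty sets; `0` for `∅`). -/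
def infOm (s : Set Om) : Om :=
  ⟨sInf (Subtype.val '' s), by
    rcases (Subtype.val '' s).eq_empty_or_nonempty with h | h
    · rw [h]; simpa using omega1_pos
    · obtain ⟨x, _, he⟩ := csInf_mem h
      exact he ▸ x.2⟩

/-- Supremum of a subset of Ω.  Whenever the supremum of the set exists in Ω
(in particular for every countable subset, by regularity of `ω₁`) this is the
genuine supremum; otherwise it takes a junk value. -/
def supOm (s : Set Om) : Om :=
  if h : sSup (Subtype.val '' s) < ω₁ then ⟨sSup (Subtype.val '' s), h⟩ else ⟨0, omega1_pos⟩

/-- Finite types over the base type `o` (interpreted as Ω). -/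
inductive Ty : Type
  | base : Ty
  | arrow : Ty → Ty → Ty
deriving DecidableEq

/-- The full type structure over Ω: `El base = Ω` and
`El (arrow σ τ)` is the set of all functions `El σ → El τ`. -/
@[reducible] def El : Ty → Type 1
  | .base => Om
  | .arrow σ τ => El σ → El τ

/-- The order on each `El σ`: the ordinal order at base type, pointwise at arrow types. -/
def Le : (σ : Ty) → El σ → El σ → Prop
  | .base => fun x y => x ≤ y
  | .arrow σ τ => fun f g => ∀ x : El σ, Le τ (f x) (g x)

/-- Suprema, computed pointwise at function types. -/
def supEl : (σ : Ty) → Set (El σ) → El σ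
  | .base => supOm
  | .arrow σ τ => fun S (x : El σ) => supEl τ ((fun f : El (.arrow σ τ) => f x) '' S)

/-- Infima, computed pointwise at function types. -/
def infEl : (σ : Ty) → Set (El σ) → El σ
  | .base => infOm
  | .arrow σ τ => fun S (x : El σ) => infEl τ ((fun f : El (.arrow σ τ) => f x) '' S)

/-- `limsup_{ξ→ζ} f ξ = inf_{γ<ζ} sup_{γ≤ξ<ζ} f ξ`. -/
def limsupEl (σ : Ty) (ζ : Ordinal) (f : ∀ ξ : Ordinal, ξ < ζ → El σ) : El σ :=
  infEl σ {y | ∃ γ, ∃ _ : γ < ζ, y = supEl σ {z | ∃ ξ, ∃ h : ξ < ζ, γ ≤ ξ ∧ z = f ξ h}}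

/-- `liminf_{ξ→ζ} f ξ = sup_{γ<ζ} inf_{γ≤ξ<ζ} f ξ`. -/
def liminfEl (σ : Ty) (ζ : Ordinal) (f : ∀ ξ : Ordinal, ξ < ζ → El σ) : El σ :=
  supEl σ {y | ∃ γ, ∃ _ : γ < ζ, y = infEl σ {z | ∃ ξ, ∃ h : ξ < ζ, γ ≤ ξ ∧ z = f ξ h}}

/-- `limsup` of a ζ-indexed sequence of ordinals. -/
def oLimsup (ζ : Ordinal) (a : Ordinal → Ordinal) : Ordinal :=
  sInf {s | ∃ γ, γ < ζ ∧ s = sSup (a '' {ξ | γ ≤ ξ ∧ ξ < ζ})}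

/-- `liminf` of a ζ-indexed sequence of ordinals. -/
def oLiminf (ζ : Ordinal) (a : Ordinal → Ordinal) : Ordinal :=
  sSup {s | ∃ γ, γ < ζ ∧ s = sInf (a '' {ξ | γ ≤ ξ ∧ ξ < ζ})}

/-- The α-iteration functional of type σ:
`Iter 0 f x = x`, `Iter (α+1) f x = f (Iter α f x)`, and
`Iter μ f x = limsup_{ξ→μ} Iter ξ f x` for limit μ. -/
def Iter (σ : Ty) (α : Ordinal) : (El σ → El σ) → El σ → El σ :=
  Ordinal.limitRecOn (motive := fun _ => (El σ → El σ) → El σ → El σ) α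
    (fun _ x => x)
    (fun _ ih f x => f (ih f x))
    (fun μ _ ih f x => limsupEl σ μ (fun ξ h => ih ξ h f x))

/-- The pair (hereditarily positive, ≤hp), defined simultaneously by recursion on the type.
Every element of `Ω` and of `Ω_{ρ→τ}` with `ρ ≠ τ` is h.p., and `≤hp` there is `≤`;
`f : Ω_{τ→τ}` is h.p. iff it preserves h.p., is inflationary on h.p. arguments and is
monotone (w.r.t. `≤hp`) on h.p. arguments; `f ≤hp f'` on `Ω_{τ→τ}` iff `f x ≤hp f' x`
for every h.p. `x`. -/
def HPaux : (σ : Ty) → (El σ → Prop) × (El σ → El σ → Prop)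
  | .base => ⟨fun _ => True, fun x y => x ≤ y⟩
  | .arrow ρ τ =>
      ⟨fun f =>
        if h : ρ = τ then
          (∀ x, (HPaux ρ).1 x → (HPaux τ).1 (f x)) ∧
          (∀ x, (HPaux ρ).1 x → (HPaux τ).2 (cast (congrArg El h) x) (f x)) ∧
          (∀ x y, (HPaux ρ).1 x → (HPaux ρ).1 y → (HPaux ρ).2 x y → (HPaux τ).2 (f x) (f y))
        else True,
       fun f g =>
        if ρ = τ then ∀ x, (HPaux ρ).1 x → (HPaux τ).2 (f x) (g x)
        else Le (.arrow ρ τ) f g⟩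

/-- Hereditarily positive functionals. -/
def Hp (σ : Ty) : El σ → Prop := (HPaux σ).1

/-- The order `≤hp`. -/
def HpLe (σ : Ty) : El σ → El σ → Prop := (HPaux σ).2

/-- `f =hp g` iff `f ≤hp g` and `g ≤hp f`. -/
def HpEq (σ : Ty) (f g : El σ) : Prop := HpLe σ f g ∧ HpLe σ g f

/-- The pair (hereditarily monotone, ≤ on the hereditarily monotone structure),
by recursion on the type.  `f` is hereditarily monotone iff it maps hereditarily
monotone arguments to hereditarily monotone values, monotonically; the order is
pointwise over hereditarily monotone arguments (i.e. the order of `Ω^mon`). -/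
def HMaux : (σ : Ty) → (El σ → Prop) × (El σ → El σ → Prop)
  | .base => ⟨fun _ => True, fun x y => x ≤ y⟩
  | .arrow σ τ =>
      ⟨fun f =>
        (∀ x, (HMaux σ).1 x → (HMaux τ).1 (f x)) ∧
        (∀ x y, (HMaux σ).1 x → (HMaux σ).1 y → (HMaux σ).2 x y → (HMaux τ).2 (f x) (f y)),
       fun f g => ∀ x, (HMaux σ).1 x → (HMaux τ).2 (f x) (g x)⟩

/-- Hereditarily monotone functionals: the members of the type structure `Ω^mon`. -/
def HM (σ : Ty) : El σ → Prop := (HMaux σ).1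

/-- The (pointwise) order of the hereditarily monotone type structure `Ω^mon`. -/
def LeHM (σ : Ty) : El σ → El σ → Prop := (HMaux σ).2

/-- Equality in the hereditarily monotone type structure `Ω^mon`. -/
def EqHM (σ : Ty) (f g : El σ) : Prop := LeHM σ f g ∧ LeHM σ g f

/-! ### Auxiliary lemmas -/

section Aux

open Cardinal in
lemma sSup_lt_omega1 {s : Set Ordinal} (hc : s.Countable) (hb : ∀ x ∈ s, x < ω₁) :
    sSup s < ω₁ := by
  rcases s.eq_empty_or_nonempty with rfl | hne
  · rw [csSup_empty]; exact omega1_pos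
  · obtain ⟨g, rfl⟩ := hc.exists_eq_range hne
    have h1 : sSup (Set.range g) = iSup g := rfl
    rw [h1]
    exact Ordinal.iSup_lt_omega_one fun n => hb (g n) ⟨n, rfl⟩

lemma countable_Iio_of_lt_omega1 {ζ : Ordinal} (h : ζ < ω₁) : (Set.Iio ζ).Countable := by
  rw [Cardinal.countable_iff_lt_aleph_one, Ordinal.mk_Iio_ordinal, Cardinal.lift_lt_aleph_one]
  rwa [← Cardinal.lt_ord, Cardinal.ord_aleph]

/-! Base-type sup/inf bounds. -/

lemma supOm_le {S : Set Om} {y : Om} (h : ∀ s ∈ S, s ≤ y) : supOm S ≤ y := by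
  have hb : sSup (Subtype.val '' S) ≤ y.val := by
    rcases (Subtype.val '' S).eq_empty_or_nonempty with he | hne
    · rw [he, csSup_empty]; exact bot_le
    · exact csSup_le hne (by rintro a ⟨s, hs, rfl⟩; exact h s hs)
  rw [supOm, dif_pos (lt_of_le_of_lt hb y.2)]
  exact Subtype.coe_le_coe.1 hb

lemma le_supOm {S : Set Om} (hc : S.Countable) {s : Om} (hs : s ∈ S) : s ≤ supOm S := by
  have hlt : sSup (Subtype.val '' S) < ω₁ :=
    sSup_lt_omega1 (hc.image _) (by rintro a ⟨t, _, rfl⟩; exact t.2)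
  rw [supOm, dif_pos hlt]
  refine Subtype.coe_le_coe.1 (le_csSup ⟨ω₁, ?_⟩ ⟨s, hs, rfl⟩)
  rintro a ⟨t, _, rfl⟩; exact t.2.le

lemma infOm_le {S : Set Om} {s : Om} (hs : s ∈ S) : infOm S ≤ s :=
  Subtype.coe_le_coe.1 (csInf_le' ⟨s, hs, rfl⟩)

lemma le_infOm {S : Set Om} (hne : S.Nonempty) {y : Om} (h : ∀ s ∈ S, y ≤ s) :
    y ≤ infOm S :=
  Subtype.coe_le_coe.1
    (le_csInf (hne.image _) (by rintro a ⟨t, ht, rfl⟩; exact Subtype.coe_le_coe.2 (h t ht)))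

/-! Unfolding lemmas for `Hp` and `HpLe`. -/

lemma hp_base (x : El .base) : Hp .base x := trivial

lemma hp_arrow_ne {ρ τ : Ty} (h : ρ ≠ τ) (f : El (.arrow ρ τ)) : Hp (.arrow ρ τ) f := by
  simp [Hp, HPaux, h]

lemma hp_arrow_iff {τ : Ty} {f : El (.arrow τ τ)} :
    Hp (.arrow τ τ) f ↔
      (∀ x, Hp τ x → Hp τ (f x)) ∧
      (∀ x, Hp τ x → HpLe τ x (f x)) ∧
      (∀ x y, Hp τ x → Hp τ y → HpLe τ x y → HpLe τ (f x) (f y)) := by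
  simp [Hp, HpLe, HPaux]

lemma hple_arrow_iff {τ : Ty} {f g : El (.arrow τ τ)} :
    HpLe (.arrow τ τ) f g ↔ ∀ x, Hp τ x → HpLe τ (f x) (g x) := by
  simp [HpLe, Hp, HPaux]

lemma hple_arrow_ne {ρ τ : Ty} (h : ρ ≠ τ) {f g : El (.arrow ρ τ)} :
    HpLe (.arrow ρ τ) f g ↔ Le (.arrow ρ τ) f g := by
  simp [HpLe, HPaux, h]

/-! Basic order lemmas for `Le` and `HpLe`. -/

lemma le_refl_el : ∀ (τ : Ty) (x : El τ), Le τ x x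
  | .base, x => le_refl x
  | .arrow _ τ, f => fun x => le_refl_el τ (f x)

lemma le_trans_el : ∀ (τ : Ty) {x y z : El τ}, Le τ x y → Le τ y z → Le τ x z
  | .base, _, _, _, h1, h2 => le_trans h1 h2
  | .arrow _ τ, _, _, _, h1, h2 => fun x => le_trans_el τ (h1 x) (h2 x)

lemma le_imp_hple : ∀ (τ : Ty) {x y : El τ}, Le τ x y → HpLe τ x y := by
  intro τ
  induction τ with
  | base => exact fun h => h
  | arrow ρ τ ihρ ihτ =>
    intro f g h
    by_cases e : ρ = τ
    · subst e
      rw [hple_arrow_iff]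
      exact fun x _ => ihτ (h x)
    · rw [hple_arrow_ne e]; exact h

lemma hple_refl (τ : Ty) (x : El τ) : HpLe τ x x := le_imp_hple τ (le_refl_el τ x)

lemma hple_trans : ∀ (τ : Ty) {x y z : El τ}, HpLe τ x y → HpLe τ y z → HpLe τ x z := by
  intro τ
  induction τ with
  | base => exact fun h1 h2 => le_trans h1 h2
  | arrow ρ τ ihρ ihτ =>
    intro f g h hfg hgh
    by_cases e : ρ = τ
    · subst e
      rw [hple_arrow_iff] at *
      exact fun x hx => ihτ (hfg x hx) (hgh x hx)
    · rw [hple_arrow_ne e] at *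
      exact fun x => le_trans_el τ (hfg x) (hgh x)

/-! Sup/inf bounds for the `Le` order. -/

lemma supEl_le : ∀ (τ : Ty) {S : Set (El τ)} {y : El τ},
    (∀ s ∈ S, Le τ s y) → Le τ (supEl τ S) y := by
  intro τ
  induction τ with
  | base => exact fun h => supOm_le h
  | arrow ρ τ ihρ ihτ =>
    intro S y h x
    exact ihτ (by rintro z ⟨f, hf, rfl⟩; exact h f hf x)

lemma le_supEl : ∀ (τ : Ty) {S : Set (El τ)}, S.Countable → ∀ {s}, s ∈ S →
    Le τ s (supEl τ S) := by
  intro τ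
  induction τ with
  | base =>
    intro S hc s hs
    exact le_supOm hc hs
  | arrow ρ τ ihρ ihτ =>
    intro S hc s hs x
    exact ihτ (hc.image _) ⟨s, hs, rfl⟩

lemma infEl_le : ∀ (τ : Ty) {S : Set (El τ)} {s}, s ∈ S → Le τ (infEl τ S) s := by
  intro τ
  induction τ with
  | base =>
    intro S s hs
    exact infOm_le hs
  | arrow ρ τ ihρ ihτ =>
    intro S s hs x
    exact ihτ ⟨s, hs, rfl⟩

lemma le_infEl : ∀ (τ : Ty) {S : Set (El τ)}, S.Nonempty → ∀ {y : El τ},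
    (∀ s ∈ S, Le τ y s) → Le τ y (infEl τ S) := by
  intro τ
  induction τ with
  | base =>
    intro S hne y h
    exact le_infOm hne h
  | arrow ρ τ ihρ ihτ =>
    intro S hne y h x
    exact ihτ (hne.image _) (by rintro z ⟨f, hf, rfl⟩; exact h f hf x)

/-! Sup/inf bounds for the `HpLe` order. -/

lemma hple_le_supEl (τ : Ty) {S : Set (El τ)} (hc : S.Countable) {s} (hs : s ∈ S) :
    HpLe τ s (supEl τ S) := le_imp_hple τ (le_supEl τ hc hs)

lemma hple_infEl_le (τ : Ty) {S : Set (El τ)} {s} (hs : s ∈ S) :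
    HpLe τ (infEl τ S) s := le_imp_hple τ (infEl_le τ hs)

lemma hple_supEl_le : ∀ (τ : Ty) {S : Set (El τ)} {y : El τ},
    (∀ s ∈ S, HpLe τ s y) → HpLe τ (supEl τ S) y := by
  intro τ
  induction τ with
  | base => exact fun h => supOm_le h
  | arrow ρ τ ihρ ihτ =>
    intro S y h
    by_cases e : ρ = τ
    · subst e
      rw [hple_arrow_iff]
      intro x hx
      refine ihτ ?_
      rintro z ⟨f, hf, rfl⟩
      exact (hple_arrow_iff.1 (h f hf)) x hx
    · rw [hple_arrow_ne e]
      exact supEl_le _ fun s hs => (hple_arrow_ne e).1 (h s hs)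

lemma hple_le_infEl : ∀ (τ : Ty) {S : Set (El τ)}, S.Nonempty → ∀ {y : El τ},
    (∀ s ∈ S, HpLe τ y s) → HpLe τ y (infEl τ S) := by
  intro τ
  induction τ with
  | base =>
    intro S hne y h
    exact le_infOm hne h
  | arrow ρ τ ihρ ihτ =>
    intro S hne y h
    by_cases e : ρ = τ
    · subst e
      rw [hple_arrow_iff]
      intro x hx
      refine ihτ (hne.image _) ?_
      rintro z ⟨f, hf, rfl⟩
      exact (hple_arrow_iff.1 (h f hf)) x hx
    · rw [hple_arrow_ne e]
      exact le_infEl _ hne fun f hf => (hple_arrow_ne e).1 (h f hf)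

/-! Hereditary positivity of infima and (countable) suprema of h.p. families. -/

lemma hp_infEl : ∀ (τ : Ty) {S : Set (El τ)}, S.Nonempty → (∀ s ∈ S, Hp τ s) →
    Hp τ (infEl τ S) := by
  intro τ
  induction τ with
  | base => exact fun _ _ => trivial
  | arrow ρ τ ihρ ihτ =>
    intro S hne hhp
    by_cases e : ρ = τ
    · subst e
      rw [hp_arrow_iff]
      refine ⟨?_, ?_, ?_⟩
      · intro x hx
        exact ihτ (hne.image _)
          (by rintro z ⟨f, hf, rfl⟩; exact (hp_arrow_iff.1 (hhp f hf)).1 x hx)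
      · intro x hx
        refine hple_le_infEl _ (hne.image _) ?_
        rintro z ⟨f, hf, rfl⟩
        exact (hp_arrow_iff.1 (hhp f hf)).2.1 x hx
      · intro x y hx hy hxy
        refine hple_le_infEl _ (hne.image _) ?_
        rintro z ⟨f, hf, rfl⟩
        exact hple_trans _ (hple_infEl_le _ ⟨f, hf, rfl⟩)
          ((hp_arrow_iff.1 (hhp f hf)).2.2 x y hx hy hxy)
    · exact hp_arrow_ne e _

lemma hp_supEl : ∀ (τ : Ty) {S : Set (El τ)}, S.Nonempty → S.Countable →
    (∀ s ∈ S, Hp τ s) → Hp τ (supEl τ S) := by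
  intro τ
  induction τ with
  | base => exact fun _ _ _ => trivial
  | arrow ρ τ ihρ ihτ =>
    intro S hne hc hhp
    by_cases e : ρ = τ
    · subst e
      rw [hp_arrow_iff]
      refine ⟨?_, ?_, ?_⟩
      · intro x hx
        exact ihτ (hne.image _) (hc.image _)
          (by rintro z ⟨f, hf, rfl⟩; exact (hp_arrow_iff.1 (hhp f hf)).1 x hx)
      · intro x hx
        obtain ⟨f, hf⟩ := hne
        exact hple_trans _ ((hp_arrow_iff.1 (hhp f hf)).2.1 x hx)
          (hple_le_supEl _ (hc.image _) ⟨f, hf, rfl⟩)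
      · intro x y hx hy hxy
        refine hple_supEl_le _ ?_
        rintro z ⟨f, hf, rfl⟩
        exact hple_trans _ ((hp_arrow_iff.1 (hhp f hf)).2.2 x y hx hy hxy)
          (hple_le_supEl _ (hc.image _) ⟨f, hf, rfl⟩)
    · exact hp_arrow_ne e _

/-! Unfolding equations for `Iter`. -/

lemma Iter_zero (σ : Ty) (f : El σ → El σ) (x : El σ) : Iter σ 0 f x = x := by
  rw [Iter, Ordinal.limitRecOn_zero]

lemma Iter_succ (σ : Ty) (α : Ordinal) (f : El σ → El σ) (x : El σ) :
    Iter σ (Order.succ α) f x = f (Iter σ α f x) := by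
  rw [Iter, Ordinal.limitRecOn_succ]
  rfl

lemma Iter_limit (σ : Ty) {μ : Ordinal} (h : Order.IsSuccLimit μ) (f : El σ → El σ) (x : El σ) :
    Iter σ μ f x = limsupEl σ μ (fun ξ _ => Iter σ ξ f x) := by
  rw [Iter, Ordinal.limitRecOn_limit _ _ _ _ h]
  rfl

/-! The main transfinite induction. -/

lemma iter_main (σ : Ty) : ∀ α : Ordinal, α < ω₁ →
    ∀ f : El σ → El σ, Hp (.arrow σ σ) f →
    (∀ x, Hp σ x → Hp σ (Iter σ α f x)) ∧
    (∀ x, Hp σ x → HpLe σ x (Iter σ α f x)) ∧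
    (∀ x y, Hp σ x → Hp σ y → HpLe σ x y → HpLe σ (Iter σ α f x) (Iter σ α f y)) ∧
    (1 ≤ α → ∀ x, Hp σ x → HpLe σ (f x) (Iter σ α f x)) ∧
    (∀ g : El σ → El σ, Hp (.arrow σ σ) g → (∀ z, Hp σ z → HpLe σ (f z) (g z)) →
      ∀ x, Hp σ x → HpLe σ (Iter σ α f x) (Iter σ α g x)) := by
  intro α
  induction α using Ordinal.induction with
  | h α IH =>
  intro hα f hf
  obtain ⟨hf1, hf2, hf3⟩ := hp_arrow_iff.1 hf
  rcases Ordinal.zero_or_succ_or_isSuccLimit α with rfl | ⟨β, rfl⟩ | hlim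
  · -- zero case
    refine ⟨?_, ?_, ?_, ?_, ?_⟩ <;> simp only [Iter_zero]
    · exact fun x hx => hx
    · exact fun x hx => hple_refl σ x
    · exact fun x y _ _ h => h
    · intro h; exact absurd h (by simp)
    · exact fun g _ _ x _ => hple_refl σ x
  · -- successor case
    have hβ : β < Order.succ β := Order.lt_succ β
    have hβω : β < ω₁ := lt_trans hβ hα
    obtain ⟨ih1, ih2, ih3, _, ih5⟩ := IH β hβ hβω f hf
    refine ⟨?_, ?_, ?_, ?_, ?_⟩ <;> simp only [Iter_succ]
    · exact fun x hx => hf1 _ (ih1 x hx)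
    · exact fun x hx => hple_trans σ (ih2 x hx) (hf2 _ (ih1 x hx))
    · exact fun x y hx hy h => hf3 _ _ (ih1 x hx) (ih1 y hy) (ih3 x y hx hy h)
    · exact fun _ x hx => hf3 _ _ hx (ih1 x hx) (ih2 x hx)
    · intro g hg hfg x hx
      obtain ⟨hg1, hg2, hg3⟩ := hp_arrow_iff.1 hg
      exact hple_trans σ
        (hf3 _ _ (ih1 x hx) ((IH β hβ hβω g hg).1 x hx) (ih5 g hg hfg x hx))
        (hfg _ ((IH β hβ hβω g hg).1 x hx))
  · -- limit case
    have h0 : (0 : Ordinal) < α := hlim.pos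
    -- notation for the bands
    set Sg : (El σ → El σ) → Ordinal → El σ → Set (El σ) := fun f' γ x =>
      {z | ∃ ξ, ∃ _ : ξ < α, γ ≤ ξ ∧ z = Iter σ ξ f' x} with hSg
    have hIterEq : ∀ (f' : El σ → El σ) x, Iter σ α f' x =
        infEl σ {y | ∃ γ, ∃ _ : γ < α, y = supEl σ (Sg f' γ x)} := by
      intro f' x
      rw [Iter_limit σ hlim, limsupEl]
    have hTne : ∀ f' x,
        ({y | ∃ γ, ∃ _ : γ < α, y = supEl σ (Sg f' γ x)} : Set (El σ)).Nonempty :=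
      fun f' x => ⟨supEl σ (Sg f' 0 x), ⟨0, h0, rfl⟩⟩
    have hSne : ∀ f' {γ}, γ < α → ∀ x, (Sg f' γ x).Nonempty :=
      fun f' {γ} hγ x => ⟨Iter σ γ f' x, ⟨γ, hγ, le_refl γ, rfl⟩⟩
    have hSc : ∀ f' γ x, (Sg f' γ x).Countable := by
      intro f' γ x
      have hcnt : (Set.Iio α).Countable := countable_Iio_of_lt_omega1 hα
      have := hcnt.to_subtype
      refine Set.Countable.mono ?_
        (Set.countable_range fun p : Set.Iio α => Iter σ p.1 f' x)
      rintro z ⟨ξ, hξ, _, rfl⟩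
      exact ⟨⟨ξ, hξ⟩, rfl⟩
    have hShp : ∀ {γ}, γ < α → ∀ x, Hp σ x → ∀ z ∈ Sg f γ x, Hp σ z := by
      rintro γ hγ x hx z ⟨ξ, hξ, _, rfl⟩
      exact (IH ξ hξ (lt_trans hξ hα) f hf).1 x hx
    have key_ub : ∀ {γ} (_ : γ < α) {ξ} (hξ : ξ < α) (_ : γ ≤ ξ) (x : El σ),
        HpLe σ (Iter σ ξ f x) (supEl σ (Sg f γ x)) :=
      fun {γ} _ {ξ} hξ hγξ x => hple_le_supEl σ (hSc f γ x) ⟨ξ, hξ, hγξ, rfl⟩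
    refine ⟨?_, ?_, ?_, ?_, ?_⟩
    · -- h.p.
      intro x hx
      rw [hIterEq f x]
      refine hp_infEl σ (hTne f x) ?_
      rintro y ⟨γ, hγ, rfl⟩
      exact hp_supEl σ (hSne f hγ x) (hSc f γ x) (hShp hγ x hx)
    · -- inflationary
      intro x hx
      rw [hIterEq f x]
      refine hple_le_infEl σ (hTne f x) ?_
      rintro y ⟨γ, hγ, rfl⟩
      exact hple_trans σ ((IH γ hγ (lt_trans hγ hα) f hf).2.1 x hx)
        (key_ub hγ hγ (le_refl γ) x)
    · -- monotone in the argument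
      intro x y hx hy hxy
      rw [hIterEq f x, hIterEq f y]
      refine hple_le_infEl σ (hTne f y) ?_
      rintro t ⟨γ, hγ, rfl⟩
      refine hple_trans σ (hple_infEl_le σ ⟨γ, hγ, rfl⟩) (hple_supEl_le σ ?_)
      rintro z ⟨ξ, hξ, hγξ, rfl⟩
      exact hple_trans σ
        ((IH ξ hξ (lt_trans hξ hα) f hf).2.2.1 x y hx hy hxy)
        (key_ub hγ hξ hγξ y)
    · -- dominates f
      intro _ x hx
      rw [hIterEq f x]
      refine hple_le_infEl σ (hTne f x) ?_
      rintro y ⟨γ, hγ, rfl⟩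
      have hξα : max γ 1 < α := max_lt hγ (Ordinal.one_lt_of_isSuccLimit hlim)
      exact hple_trans σ
        ((IH (max γ 1) hξα (lt_trans hξα hα) f hf).2.2.2.1 (le_max_right γ 1) x hx)
        (key_ub hγ hξα (le_max_left γ 1) x)
    · -- monotone in the function
      intro g hg hfg x hx
      rw [hIterEq f x, hIterEq g x]
      refine hple_le_infEl σ (hTne g x) ?_
      rintro t ⟨γ, hγ, rfl⟩
      refine hple_trans σ (hple_infEl_le σ ⟨γ, hγ, rfl⟩) (hple_supEl_le σ ?_)
      rintro z ⟨ξ, hξ, hγξ, rfl⟩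
      refine hple_trans σ
        ((IH ξ hξ (lt_trans hξ hα) f hf).2.2.2.2 g hg hfg x hx) ?_
      exact hple_le_supEl σ (hSc g γ x) ⟨ξ, hξ, hγξ, rfl⟩

end Aux

/-- For every finite type `σ` and countable ordinal `α ≥ 1`,
`Iter_α^σ` is hereditarily positive. -/
theorem iter_hp (σ : Ty) (α : Ordinal) (hα1 : 1 ≤ α) (hα : α < ω₁) :
    Hp (.arrow (.arrow σ σ) (.arrow σ σ)) (Iter σ α) := by
  rw [hp_arrow_iff]
  refine ⟨?_, ?_, ?_⟩
  · intro F hF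
    obtain ⟨h1, h2, h3, _, _⟩ := iter_main σ α hα F hF
    exact hp_arrow_iff.2 ⟨h1, h2, h3⟩
  · intro F hF
    exact hple_arrow_iff.2 ((iter_main σ α hα F hF).2.2.2.1 hα1)
  · intro F G hF hG hFG
    exact hple_arrow_iff.2
      ((iter_main σ α hα F hF).2.2.2.2 G hG (hple_arrow_iff.1 hFG))

end IterOrd
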